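/- arXiv:1602.05605 — 4 statements merged into one kernel-verified Lean document; each statement's English description precedes it below -/
import Mathlib

section
/- If f and g are both α-differentiable at t > 0 (α ∈ (0,1]), then T_α(f·g)(t) = f(t)·(T_α g)(t) + g(t)·(T_α f)(t). -/
def HasConfDerivAt (α : ℝ) (f : ℝ → ℝ) (t L : ℝ) : Prop :=
  Filter.Tendsto (fun ε : ℝ => (f (t + ε * t ^ (1 - α)) - f t) / ε)
    (nhdsWithin 0 {0}ᶜ) (nhds L)

theorem conf_deriv_mul (α : ℝ) (hα : α ∈ Set.Ioc (0:ℝ) 1)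
    (f g : ℝ → ℝ) (t Lf Lg : ℝ) (ht : 0 < t)
    (hf : HasConfDerivAt α f t Lf) (hg : HasConfDerivAt α g t Lg) :
    HasConfDerivAt α (fun s => f s * g s) t (f t * Lg + g t * Lf) := by
  unfold HasConfDerivAt at *
  set h := t ^ (1 - α) with hh
  have hne : ∀ᶠ ε in nhdsWithin (0:ℝ) {0}ᶜ, ε ≠ 0 :=
    eventually_mem_nhdsWithin
  have hid : Filter.Tendsto (fun ε : ℝ => ε) (nhdsWithin 0 {0}ᶜ) (nhds 0) :=
    Filter.tendsto_id.mono_left nhdsWithin_le_nhds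
  have hfc : Filter.Tendsto (fun ε : ℝ => f (t + ε * h)) (nhdsWithin 0 {0}ᶜ)
      (nhds (f t)) := by
    have h1 : Filter.Tendsto (fun ε : ℝ =>
        ((f (t + ε * h) - f t) / ε) * ε + f t) (nhdsWithin 0 {0}ᶜ)
        (nhds (Lf * 0 + f t)) := (hf.mul hid).add tendsto_const_nhds
    rw [mul_zero, zero_add] at h1
    refine h1.congr' ?_
    filter_upwards [hne] with ε hε
    field_simp
    ring
  have key : Filter.Tendsto (fun ε : ℝ =>
      f (t + ε * h) * ((g (t + ε * h) - g t) / ε) +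
      g t * ((f (t + ε * h) - f t) / ε)) (nhdsWithin 0 {0}ᶜ)
      (nhds (f t * Lg + g t * Lf)) :=
    (hfc.mul hg).add (tendsto_const_nhds.mul hf)
  refine key.congr' ?_
  filter_upwards [hne] with ε hε
  field_simp
  ring
end

section
/- For α ∈ (0,1], p > 0 with p/α a nonnegative integer, the conformable fractional differential transform of f(t) = (t-t₀)^p around t₀ is F_α(k) = δ(k - p/α), i.e., F_α(k) = 1 if k = p/α and 0 otherwise. Equivalently, (1/(α^k k!)) · [(T_α^{t₀})^(k) f](t₀⁺) equals 1 when k = p/α and 0 otherwise. -/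
/-- The left conformable fractional derivative operator of order `α` starting at `a`
(for differentiable functions): `(T_α^a f)(t) = (t-a)^(1-α) f'(t)`. -/
noncomputable def confD (α a : ℝ) (f : ℝ → ℝ) : ℝ → ℝ :=
  fun t => (t - a) ^ (1 - α) * deriv f t

lemma prod_range_add_one_eq_factorial' (k : ℕ) :
    ∏ j ∈ Finset.range k, (j + 1) = k.factorial := by
  induction k with
  | zero => simp
  | succ m ihm => rw [Finset.prod_range_succ, ihm, Nat.factorial_succ, Nat.mul_comm]

lemma prod_range_sub_eq_factorial (k : ℕ) :
    ∏ j ∈ Finset.range k, (k - j) = k.factorial := by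
  have h1 : ∏ j ∈ Finset.range k, (k - j) = ∏ j ∈ Finset.range k, (j + 1) := by
    rw [← Finset.prod_range_reflect (fun j => j + 1) k]
    exact Finset.prod_congr rfl (fun j hj => by
      simp only [Finset.mem_range] at hj; omega)
  rw [h1, prod_range_add_one_eq_factorial']

lemma confD_iter_eq (α t₀ p : ℝ) (k : ℕ) :
    ∀ t ∈ Set.Ioi t₀,
      (confD α t₀)^[k] (fun s => (s - t₀) ^ p) t
        = (∏ j ∈ Finset.range k, (p - (j : ℝ) * α)) * (t - t₀) ^ (p - (k : ℝ) * α) := by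
  induction k with
  | zero =>
      intro t ht
      simp
  | succ k ih =>
      intro t ht
      have htpos : (0 : ℝ) < t - t₀ := sub_pos.mpr ht
      rw [Function.iterate_succ_apply']
      set C : ℝ := ∏ j ∈ Finset.range k, (p - (j : ℝ) * α) with hC
      set q : ℝ := p - (k : ℝ) * α with hq
      have hEq : (confD α t₀)^[k] (fun s => (s - t₀) ^ p)
          =ᶠ[nhds t] fun s => C * (s - t₀) ^ q := by
        filter_upwards [isOpen_Ioi.mem_nhds ht] with s hs
        exact ih s hs
      have hdi : HasDerivAt (fun s : ℝ => (s - t₀) ^ q)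
          (q * (t - t₀) ^ (q - 1) * 1) t :=
        by have h1 := Real.hasDerivAt_rpow_const (x := t - t₀) (p := q) (Or.inl (ne_of_gt htpos))
           have h2 := (hasDerivAt_id' t).sub_const t₀
           exact h1.comp t h2
      have hd : HasDerivAt (fun s : ℝ => C * (s - t₀) ^ q)
          (C * (q * (t - t₀) ^ (q - 1) * 1)) t := hdi.const_mul C
      have hderiv : deriv ((confD α t₀)^[k] (fun s => (s - t₀) ^ p)) t
          = C * (q * (t - t₀) ^ (q - 1) * 1) := by
        rw [hEq.deriv_eq, hd.deriv]
      show (t - t₀) ^ (1 - α) * deriv ((confD α t₀)^[k] (fun s => (s - t₀) ^ p)) t = _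
      rw [hderiv, Finset.prod_range_succ]
      have hre : (1 - α) + (q - 1) = p - ((k + 1 : ℕ) : ℝ) * α := by
        rw [hq]; push_cast; ring
      rw [mul_one]
      calc (t - t₀) ^ (1 - α) * (C * (q * (t - t₀) ^ (q - 1)))
          = C * q * ((t - t₀) ^ (1 - α) * (t - t₀) ^ (q - 1)) := by ring
        _ = C * q * (t - t₀) ^ ((1 - α) + (q - 1)) := by
            rw [← Real.rpow_add htpos]
        _ = _ := by rw [hre]

theorem conf_transform_power (α : ℝ) (hα : α ∈ Set.Ioc (0:ℝ) 1)
    (t₀ p : ℝ) (n : ℕ) (hp : 0 < p) (hpn : p = (n : ℝ) * α) (k : ℕ) :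
    Filter.Tendsto
      (fun t => (1 / (α ^ k * (Nat.factorial k : ℝ))) * ((confD α t₀)^[k] (fun s => (s - t₀) ^ p)) t)
      (nhdsWithin t₀ (Set.Ioi t₀)) (nhds (if k = n then 1 else 0)) := by
  obtain ⟨hα0, hα1⟩ := hα
  set C : ℝ := ∏ j ∈ Finset.range k, (p - (j : ℝ) * α) with hC
  set c : ℝ := (1 / (α ^ k * (Nat.factorial k : ℝ))) * C with hc
  have hcong : (fun t => (1 / (α ^ k * (Nat.factorial k : ℝ)))
        * ((confD α t₀)^[k] (fun s => (s - t₀) ^ p)) t)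
      =ᶠ[nhdsWithin t₀ (Set.Ioi t₀)] fun t => c * (t - t₀) ^ (p - (k : ℝ) * α) := by
    filter_upwards [self_mem_nhdsWithin] with t ht
    rw [confD_iter_eq α t₀ p k t ht]; ring
  apply Filter.Tendsto.congr' hcong.symm
  rcases lt_trichotomy k n with hkn | hkn | hkn
  · -- k < n : exponent positive, limit 0
    rw [if_neg (Nat.ne_of_lt hkn)]
    have he : 0 < p - (k : ℝ) * α := by
      rw [hpn]
      have : (k : ℝ) < (n : ℝ) := by exact_mod_cast hkn
      nlinarith
    have h1 : Filter.Tendsto (fun t : ℝ => t - t₀) (nhdsWithin t₀ (Set.Ioi t₀)) (nhds 0) := by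
      have := ((continuous_sub_right t₀).tendsto t₀).mono_left
        (nhdsWithin_le_nhds (s := Set.Ioi t₀))
      simpa using this
    have h2 : Filter.Tendsto (fun x : ℝ => x ^ (p - (k : ℝ) * α)) (nhds 0) (nhds 0) := by
      have := (Real.continuousAt_rpow_const 0 (p - (k : ℝ) * α) (Or.inr he.le)).tendsto
      rwa [Real.zero_rpow (ne_of_gt he)] at this
    have := (h2.comp h1).const_mul c
    simpa using this
  · -- k = n : constant 1
    subst hkn
    rw [if_pos rfl]
    have hCval : C = α ^ k * (Nat.factorial k : ℝ) := by
      rw [hC]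
      have hterm : ∀ j ∈ Finset.range k, p - (j : ℝ) * α = ((k - j : ℕ) : ℝ) * α := by
        intro j hj
        have hj' : j < k := Finset.mem_range.mp hj
        rw [hpn]
        push_cast [Nat.cast_sub hj'.le]
        ring
      rw [Finset.prod_congr rfl hterm, Finset.prod_mul_distrib, Finset.prod_const,
        Finset.card_range, ← Nat.cast_prod, prod_range_sub_eq_factorial]
      ring
    have hcval : c = 1 := by
      rw [hc, hCval, one_div, inv_mul_cancel₀]
      positivity
    have hexp : p - (k : ℝ) * α = 0 := by rw [hpn]; ring
    have : (fun t : ℝ => c * (t - t₀) ^ (p - (k : ℝ) * α)) = fun _ => (1 : ℝ) := by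
      funext t; rw [hcval, hexp, Real.rpow_zero, one_mul]
    rw [this]
    exact tendsto_const_nhds
  · -- k > n : C = 0
    rw [if_neg (Nat.ne_of_gt hkn)]
    have hC0 : C = 0 := by
      rw [hC]
      apply Finset.prod_eq_zero (Finset.mem_range.mpr hkn)
      rw [hpn]; ring
    have : (fun t : ℝ => c * (t - t₀) ^ (p - (k : ℝ) * α)) = fun _ => (0 : ℝ) := by
      funext t; rw [hc, hC0, mul_zero, zero_mul]
    rw [this]
    exact tendsto_const_nhds
end

section
/- For α ∈ (0,1] and ω, c ∈ ℝ, the k-fold left conformable fractional derivative of f(t) = sin(ω(t-t₀)^α/α + c) equals ω^k · sin(ω(t-t₀)^α/α + c + kπ/2) for t > t₀; hence its conformable fractional differential transform at t₀ is F_α(k) = (ω^k/(α^k k!)) sin(kπ/2 + c). -/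
lemma sin_arg_hasDerivAt (α t₀ ω c K : ℝ) (hα0 : 0 < α) (t : ℝ) (ht : t₀ < t) :
    HasDerivAt (fun s => Real.sin (ω * (s - t₀) ^ α / α + c + K))
      (Real.cos (ω * (t - t₀) ^ α / α + c + K) * (ω * (t - t₀) ^ (α - 1))) t := by
  have h1 : HasDerivAt (fun s : ℝ => s - t₀) 1 t := (hasDerivAt_id t).sub_const t₀
  have h2 := h1.rpow_const (p := α) (Or.inl (ne_of_gt (sub_pos.2 ht)))
  have h3 := ((h2.const_mul ω).div_const α).add_const c
  have h4 := (h3.add_const K).sin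
  convert h4 using 1
  field_simp

theorem conf_transform_sin (α : ℝ) (hα : α ∈ Set.Ioc (0:ℝ) 1) (ω c t₀ : ℝ) (k : ℕ) :
    (∀ t, t₀ < t →
      ((confD α t₀)^[k] (fun s => Real.sin (ω * (s - t₀) ^ α / α + c))) t =
        ω ^ k * Real.sin (ω * (t - t₀) ^ α / α + c + (k : ℝ) * Real.pi / 2)) ∧
    Filter.Tendsto
      (fun t => (1 / (α ^ k * (Nat.factorial k : ℝ))) *
        ((confD α t₀)^[k] (fun s => Real.sin (ω * (s - t₀) ^ α / α + c))) t)
      (nhdsWithin t₀ (Set.Ioi t₀))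
      (nhds ((ω ^ k / (α ^ k * (Nat.factorial k : ℝ))) * Real.sin ((k : ℝ) * Real.pi / 2 + c))) := by
  obtain ⟨hα0, hα1⟩ := hα
  have key : ∀ k : ℕ, ∀ t, t₀ < t →
      ((confD α t₀)^[k] (fun s => Real.sin (ω * (s - t₀) ^ α / α + c))) t =
        ω ^ k * Real.sin (ω * (t - t₀) ^ α / α + c + (k : ℝ) * Real.pi / 2) := by
    intro k
    induction k with
    | zero => intro t ht; simp
    | succ k ih =>
      intro t ht
      rw [Function.iterate_succ_apply']
      show (t - t₀) ^ (1 - α) * deriv _ t = _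
      have hev : ((confD α t₀)^[k] (fun s => Real.sin (ω * (s - t₀) ^ α / α + c)))
          =ᶠ[nhds t] (fun s => ω ^ k *
            Real.sin (ω * (s - t₀) ^ α / α + c + (k : ℝ) * Real.pi / 2)) := by
        filter_upwards [Ioi_mem_nhds ht] with s hs using ih s hs
      rw [hev.deriv_eq]
      have hd := (sin_arg_hasDerivAt α t₀ ω c ((k : ℝ) * Real.pi / 2) hα0 t ht).const_mul
        (ω ^ k)
      rw [hd.deriv]
      have hpos : (0:ℝ) < t - t₀ := sub_pos.2 ht
      have hcancel : (t - t₀) ^ (1 - α) * (t - t₀) ^ (α - 1) = 1 := by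
        rw [← Real.rpow_add hpos]
        norm_num
      have harg : ω * (t - t₀) ^ α / α + c + ((k : ℕ) + 1 : ℝ) * Real.pi / 2
          = (ω * (t - t₀) ^ α / α + c + (k : ℝ) * Real.pi / 2) + Real.pi / 2 := by ring
      push_cast
      rw [harg, Real.sin_add_pi_div_two]
      calc (t - t₀) ^ (1 - α) * (ω ^ k *
            (Real.cos (ω * (t - t₀) ^ α / α + c + (k : ℝ) * Real.pi / 2) *
              (ω * (t - t₀) ^ (α - 1))))
          = ((t - t₀) ^ (1 - α) * (t - t₀) ^ (α - 1)) * (ω ^ k * ω *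
            Real.cos (ω * (t - t₀) ^ α / α + c + (k : ℝ) * Real.pi / 2)) := by ring
        _ = ω ^ (k + 1) * Real.cos (ω * (t - t₀) ^ α / α + c + (k : ℝ) * Real.pi / 2) := by
            rw [hcancel, pow_succ]; ring
  refine ⟨key k, ?_⟩
  have hcα : ContinuousAt (fun x : ℝ => x ^ α) 0 :=
    Real.continuousAt_rpow_const 0 α (Or.inr hα0.le)
  have hc1 : ContinuousAt (fun t : ℝ => (t - t₀) ^ α) t₀ := by
    have hsub : ContinuousAt (fun t : ℝ => t - t₀) t₀ := (continuousAt_id).sub continuousAt_const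
    exact ContinuousAt.comp (by rw [sub_self]; exact hcα) hsub
  have hc : ContinuousAt (fun t => ω ^ k *
      Real.sin (ω * (t - t₀) ^ α / α + c + (k : ℝ) * Real.pi / 2)) t₀ := by
    have h2 : ContinuousAt
        (fun t => ω * (t - t₀) ^ α / α + c + (k : ℝ) * Real.pi / 2) t₀ :=
      (((continuousAt_const.mul hc1).div_const α).add continuousAt_const).add continuousAt_const
    exact continuousAt_const.mul (Real.continuous_sin.continuousAt.comp h2)
  have hval : (fun t => ω ^ k *
      Real.sin (ω * (t - t₀) ^ α / α + c + (k : ℝ) * Real.pi / 2)) t₀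
      = ω ^ k * Real.sin (c + (k : ℝ) * Real.pi / 2) := by
    simp [Real.zero_rpow (ne_of_gt hα0)]
  have htend : Filter.Tendsto (fun t => ω ^ k *
      Real.sin (ω * (t - t₀) ^ α / α + c + (k : ℝ) * Real.pi / 2))
      (nhdsWithin t₀ (Set.Ioi t₀))
      (nhds (ω ^ k * Real.sin (c + (k : ℝ) * Real.pi / 2))) := by
    rw [← hval]
    exact hc.continuousWithinAt.tendsto
  have htend2 := htend.const_mul (1 / (α ^ k * (Nat.factorial k : ℝ)))
  refine Filter.Tendsto.congr' ?_ (by convert htend2 using 2 <;> rw [add_comm] <;> ring)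
  filter_upwards [self_mem_nhdsWithin] with t (ht : t₀ < t)
  rw [key k t ht]
end

section
/- For α ∈ (0,1], the function y(t) = t^α/(α - t^α) solves the conformable fractional Riccati equation (T_α y)(t) = 1 + 2y(t) + y(t)² for 0 < t with t^α < α, and y(t) → 0 as t → 0⁺. -/
theorem conf_riccati_one (α : ℝ) (hα : α ∈ Set.Ioc (0:ℝ) 1) :
    (∀ t : ℝ, 0 < t → t ^ α < α →
      t ^ (1 - α) * deriv (fun s : ℝ => s ^ α / (α - s ^ α)) t =
        1 + 2 * (t ^ α / (α - t ^ α)) + (t ^ α / (α - t ^ α)) ^ 2) ∧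
    Filter.Tendsto (fun t : ℝ => t ^ α / (α - t ^ α))
      (nhdsWithin 0 (Set.Ioi 0)) (nhds 0) := by
  obtain ⟨hα0, hα1⟩ := hα
  constructor
  · intro t ht htα
    have hne : α - t ^ α ≠ 0 := by
      have := sub_pos.mpr htα; linarith
    have hf : HasDerivAt (fun s : ℝ => s ^ α) (α * t ^ (α - 1)) t := by
      simpa [mul_comm] using Real.hasDerivAt_rpow_const (p := α) (Or.inl ht.ne')
    have hg : HasDerivAt (fun s : ℝ => α - s ^ α) (-(α * t ^ (α - 1))) t :=
      by have := (hasDerivAt_const t α).sub hf; rw [zero_sub] at this; exact this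
    have hy : HasDerivAt (fun s : ℝ => s ^ α / (α - s ^ α))
        ((α * t ^ (α - 1) * (α - t ^ α) - t ^ α * (-(α * t ^ (α - 1)))) /
          (α - t ^ α) ^ 2) t := hf.div hg hne
    rw [hy.deriv]
    have hpow : t ^ (1 - α) * t ^ (α - 1) = 1 := by
      rw [← Real.rpow_add ht]
      norm_num
    have h1 : t ^ (1 - α) *
        ((α * t ^ (α - 1) * (α - t ^ α) - t ^ α * (-(α * t ^ (α - 1)))) /
          (α - t ^ α) ^ 2) =
        (t ^ (1 - α) * t ^ (α - 1)) * (α * α / (α - t ^ α) ^ 2) := by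
      ring
    rw [h1, hpow, one_mul]
    field_simp
    ring
  · have hnum : Filter.Tendsto (fun t : ℝ => t ^ α)
        (nhdsWithin 0 (Set.Ioi 0)) (nhds 0) := by
      have : Filter.Tendsto (fun t : ℝ => t ^ α) (nhds 0) (nhds ((0:ℝ) ^ α)) :=
        (Real.continuousAt_rpow_const 0 α (Or.inr hα0.le)).tendsto
      rw [Real.zero_rpow hα0.ne'] at this
      exact this.mono_left nhdsWithin_le_nhds
    have hden : Filter.Tendsto (fun t : ℝ => α - t ^ α)
        (nhdsWithin 0 (Set.Ioi 0)) (nhds α) := by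
      simpa using (tendsto_const_nhds.sub hnum)
    have := hnum.div hden hα0.ne'
    rw [zero_div] at this
    exact this
end
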